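/- On ℂ², with matrix units e_{ij}, the operator V = e₁₁⊗e₁₂ + e₂₂⊗e₂₂ on ℂ²⊗ℂ² is a multiplicative partial isometry (it satisfies VV*V = V, the pentagon equation, and the three hexagon-type relations), its left leg contains the identity operator, but its right leg does not contain the identity operator; in particular V is not unital. -/

import Mathlib

open Matrix

namespace MPIpaper

variable {n : Type*} [Fintype n] [DecidableEq n]

noncomputable section

/-- `W₁₂ = W ⊗ 1` on `H ⊗ H ⊗ H`. -/
def leg12 (V : Matrix (n × n) (n × n) ℂ) : Matrix (n × n × n) (n × n × n) ℂ :=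
  Matrix.of fun p q => V (p.1, p.2.1) (q.1, q.2.1) * (if p.2.2 = q.2.2 then (1 : ℂ) else 0)

/-- `W₂₃ = 1 ⊗ W` on `H ⊗ H ⊗ H`. -/
def leg23 (V : Matrix (n × n) (n × n) ℂ) : Matrix (n × n × n) (n × n × n) ℂ :=
  Matrix.of fun p q => (if p.1 = q.1 then (1 : ℂ) else 0) * V p.2 q.2

/-- `W₁₃ = (1⊗Σ)(W⊗1)(1⊗Σ)` on `H ⊗ H ⊗ H`. -/
def leg13 (V : Matrix (n × n) (n × n) ℂ) : Matrix (n × n × n) (n × n × n) ℂ :=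
  Matrix.of fun p q => V (p.1, p.2.2) (q.1, q.2.2) * (if p.2.1 = q.2.1 then (1 : ℂ) else 0)

/-- A multiplicative partial isometry: `VV*V = V`, the pentagon equation, and the
three auxiliary (hexagon-type) equations. -/
def IsMPI (V : Matrix (n × n) (n × n) ℂ) : Prop :=
  V * Vᴴ * V = V ∧
  leg23 V * leg12 V = leg12 V * leg13 V * leg23 V ∧
  leg13 V * leg23 V * (leg23 V)ᴴ = (leg12 V)ᴴ * leg12 V * leg13 V ∧
  leg12 V * (leg12 V)ᴴ * leg23 V = leg23 V * leg12 V * (leg12 V)ᴴ ∧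
  leg12 V * (leg23 V)ᴴ * leg23 V = (leg23 V)ᴴ * leg23 V * leg12 V

/-- `λ(ω) = (ω ⊗ id)(V)`. -/
def lam (ω : Matrix n n ℂ →ₗ[ℂ] ℂ) (V : Matrix (n × n) (n × n) ℂ) : Matrix n n ℂ :=
  Matrix.of fun i j => ω (Matrix.of fun a b => V (a, i) (b, j))

/-- `ρ(ω) = (id ⊗ ω)(V)`. -/
def rho (ω : Matrix n n ℂ →ₗ[ℂ] ℂ) (V : Matrix (n × n) (n × n) ℂ) : Matrix n n ℂ :=
  Matrix.of fun i j => ω (Matrix.of fun a b => V (i, a) (j, b))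

/-- `1 ⊗ X` on `H ⊗ H`. -/
def oneTensor (X : Matrix n n ℂ) : Matrix (n × n) (n × n) ℂ :=
  Matrix.of fun p q => (if p.1 = q.1 then (1 : ℂ) else 0) * X p.2 q.2

/-- `X ⊗ 1` on `H ⊗ H`. -/
def tensorOne (X : Matrix n n ℂ) : Matrix (n × n) (n × n) ℂ :=
  Matrix.of fun p q => X p.1 q.1 * (if p.2 = q.2 then (1 : ℂ) else 0)

/-- `Δ(X) = V (X ⊗ 1) V*`. -/
def Delta (V : Matrix (n × n) (n × n) ℂ) (X : Matrix n n ℂ) : Matrix (n × n) (n × n) ℂ :=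
  V * tensorOne X * Vᴴ

/-- `Δ̂(X) = V* (1 ⊗ X) V`. -/
def hatDelta (V : Matrix (n × n) (n × n) ℂ) (X : Matrix n n ℂ) : Matrix (n × n) (n × n) ℂ :=
  Vᴴ * oneTensor X * V

/-- `(ω ⊗ ω')(W)` for an operator `W` on `H ⊗ H`. -/
def applyBoth (ω ω' : Matrix n n ℂ →ₗ[ℂ] ℂ) (W : Matrix (n × n) (n × n) ℂ) : ℂ :=
  ω (Matrix.of fun i j => ω' (Matrix.of fun k l => W (i, k) (j, l)))

end

/-- `V` is unital: both legs contain two-sided units for themselves as algebras. -/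
def Unital (V : Matrix (n × n) (n × n) ℂ) : Prop :=
  ∃ ε εhat : Matrix n n ℂ →ₗ[ℂ] ℂ,
    (∀ ω : Matrix n n ℂ →ₗ[ℂ] ℂ,
      lam εhat V * lam ω V = lam ω V ∧ lam ω V * lam εhat V = lam ω V) ∧
    (∀ ω : Matrix n n ℂ →ₗ[ℂ] ℂ,
      rho ε V * rho ω V = rho ω V ∧ rho ω V * rho ε V = rho ω V)

/-- The non-unital example `V = e₁₁ ⊗ e₁₂ + e₂₂ ⊗ e₂₂` on `ℂ² ⊗ ℂ²`. -/
noncomputable def exV : Matrix (Fin 2 × Fin 2) (Fin 2 × Fin 2) ℂ :=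
  Matrix.kroneckerMap (· * ·) (Matrix.single 0 0 (1 : ℂ)) (Matrix.single 0 1 (1 : ℂ)) +
  Matrix.kroneckerMap (· * ·) (Matrix.single 1 1 (1 : ℂ)) (Matrix.single 1 1 (1 : ℂ))

section Aux

set_option maxHeartbeats 2000000

lemma exV_apply (p q : Fin 2 × Fin 2) :
    exV p q =
      if p.1 = 0 ∧ q.1 = 0 ∧ p.2 = 0 ∧ q.2 = 1 then 1 else
      if p.1 = 1 ∧ q.1 = 1 ∧ p.2 = 1 ∧ q.2 = 1 then 1 else 0 := by
  obtain ⟨a, i⟩ := p; obtain ⟨b, j⟩ := q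
  fin_cases a <;> fin_cases i <;> fin_cases b <;> fin_cases j <;>
    simp [exV, Matrix.single]

/-- evaluation at an entry, as a linear functional -/
def entryLM (i j : Fin 2) : Matrix (Fin 2) (Fin 2) ℂ →ₗ[ℂ] ℂ where
  toFun X := X i j
  map_add' _ _ := rfl
  map_smul' _ _ := rfl

lemma entryLM_apply (i j : Fin 2) (X : Matrix (Fin 2) (Fin 2) ℂ) : entryLM i j X = X i j := rfl

lemma lam_apply (ω : Matrix (Fin 2) (Fin 2) ℂ →ₗ[ℂ] ℂ) (i j : Fin 2) :
    lam ω exV i j = ω (Matrix.of fun a b => exV (a, i) (b, j)) := rfl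

lemma lam_zero_zero (ω : Matrix (Fin 2) (Fin 2) ℂ →ₗ[ℂ] ℂ) :
    lam ω exV 0 0 = 0 := by
  rw [lam_apply]
  have : (Matrix.of fun a b => exV (a, (0 : Fin 2)) (b, (0 : Fin 2))) = (0 : Matrix (Fin 2) (Fin 2) ℂ) := by
    ext a b
    simp [exV_apply]
  rw [this, map_zero]

lemma mpi1 : exV * exVᴴ * exV = exV := by
  ext ⟨a, i⟩ ⟨b, j⟩
  fin_cases a <;> fin_cases i <;> fin_cases b <;> fin_cases j <;>
    simp [Matrix.mul_apply, Matrix.conjTranspose_apply, Fintype.sum_prod_type,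
      Fin.sum_univ_two, exV_apply]

lemma mpi2 : leg23 exV * leg12 exV = leg12 exV * leg13 exV * leg23 exV := by
  ext ⟨a, i, x⟩ ⟨b, j, y⟩
  fin_cases a <;> fin_cases i <;> fin_cases x <;> fin_cases b <;> fin_cases j <;> fin_cases y <;>
    simp [Matrix.mul_apply, leg12, leg13, leg23, Fintype.sum_prod_type,
      Fin.sum_univ_two, exV_apply]

lemma mpi3 : leg13 exV * leg23 exV * (leg23 exV)ᴴ = (leg12 exV)ᴴ * leg12 exV * leg13 exV := by
  ext ⟨a, i, x⟩ ⟨b, j, y⟩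
  fin_cases a <;> fin_cases i <;> fin_cases x <;> fin_cases b <;> fin_cases j <;> fin_cases y <;>
    simp [Matrix.mul_apply, Matrix.conjTranspose_apply, leg12, leg13, leg23, Fintype.sum_prod_type,
      Fin.sum_univ_two, exV_apply]

lemma mpi4 : leg12 exV * (leg12 exV)ᴴ * leg23 exV = leg23 exV * leg12 exV * (leg12 exV)ᴴ := by
  ext ⟨a, i, x⟩ ⟨b, j, y⟩
  fin_cases a <;> fin_cases i <;> fin_cases x <;> fin_cases b <;> fin_cases j <;> fin_cases y <;>
    simp [Matrix.mul_apply, Matrix.conjTranspose_apply, leg12, leg23, Fintype.sum_prod_type,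
      Fin.sum_univ_two, exV_apply]

lemma mpi5 : leg12 exV * (leg23 exV)ᴴ * leg23 exV = (leg23 exV)ᴴ * leg23 exV * leg12 exV := by
  ext ⟨a, i, x⟩ ⟨b, j, y⟩
  fin_cases a <;> fin_cases i <;> fin_cases x <;> fin_cases b <;> fin_cases j <;> fin_cases y <;>
    simp [Matrix.mul_apply, Matrix.conjTranspose_apply, leg12, leg23, Fintype.sum_prod_type,
      Fin.sum_univ_two, exV_apply]

lemma rho_special : rho (entryLM 0 1 + entryLM 1 1) exV = 1 := by
  ext i j
  fin_cases i <;> fin_cases j <;>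
    simp [rho, entryLM_apply, exV_apply, Matrix.one_apply]

lemma lam_e12 : lam (entryLM 0 0) exV = Matrix.single 0 1 1 := by
  ext i j
  fin_cases i <;> fin_cases j <;>
    simp [lam, entryLM_apply, exV_apply, Matrix.single]

end Aux

theorem statement17 :
    IsMPI exV ∧
    (1 : Matrix (Fin 2) (Fin 2) ℂ) ∈
      Submodule.span ℂ (Set.range (fun ω : Matrix (Fin 2) (Fin 2) ℂ →ₗ[ℂ] ℂ => rho ω exV)) ∧
    (1 : Matrix (Fin 2) (Fin 2) ℂ) ∉
      Submodule.span ℂ (Set.range (fun ω : Matrix (Fin 2) (Fin 2) ℂ →ₗ[ℂ] ℂ => lam ω exV)) ∧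
    ¬ Unital exV := by
  have hnotmem : (1 : Matrix (Fin 2) (Fin 2) ℂ) ∉
      Submodule.span ℂ (Set.range (fun ω : Matrix (Fin 2) (Fin 2) ℂ →ₗ[ℂ] ℂ => lam ω exV)) := by
    intro hmem
    have hle : Submodule.span ℂ (Set.range (fun ω : Matrix (Fin 2) (Fin 2) ℂ →ₗ[ℂ] ℂ => lam ω exV))
        ≤ LinearMap.ker (entryLM 0 0) := by
      rw [Submodule.span_le]
      rintro _ ⟨ω, rfl⟩
      simpa [entryLM_apply, LinearMap.mem_ker] using lam_zero_zero ω
    have h0 := hle hmem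
    simp [entryLM_apply, LinearMap.mem_ker, Matrix.one_apply] at h0
  refine ⟨⟨mpi1, mpi2, mpi3, mpi4, mpi5⟩, ?_, hnotmem, ?_⟩
  · exact rho_special ▸ Submodule.subset_span ⟨entryLM 0 1 + entryLM 1 1, rfl⟩
  · rintro ⟨ε, εhat, hl, _⟩
    have h := (hl (entryLM 0 0)).1
    rw [lam_e12] at h
    have h2 := Matrix.ext_iff.2 h 0 1
    simp [Matrix.mul_apply, Fin.sum_univ_two, Matrix.single, lam_zero_zero] at h2



end MPIpaper
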